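/- Let P be a Markov chain on finite nonempty state type S, G ⊆ S a goal set, and C : S → ℝ a nonnegative cost function. Suppose v : S → ℝ satisfies v s ≥ 0 for all s, v s = 0 for all s ∈ G, and v s ≥ C s + ∑_{s' ∈ S} P s s' * v s' for all s ∉ G. Then c n s ≤ v s for every n ∈ ℕ and every s ∈ S. In other words, every nonnegative vector vanishing on the goal states that dominates one step of the cost recursion is an upper bound on the bounded-horizon expected costs, which is the soundness of the expected-cost constraints in the linear-programming characterization. -/
import Mathlib


/-- Bounded-horizon expected-cost values of a Markov chain `P` w.r.t. goal set `G` and cost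
function `C`. -/
def costVal {S : Type*} [Fintype S] (P : S → S → ℝ) (G : Set S) [DecidablePred (· ∈ G)]
    (C : S → ℝ) : ℕ → S → ℝ
  | 0, _ => 0
  | n + 1, s => if s ∈ G then 0 else C s + ∑ s', P s s' * costVal P G C n s'

/-- Every nonnegative vector vanishing on the goal states that dominates one step
of the cost recursion is an upper bound on the bounded-horizon expected costs. -/
theorem cost_superharmonic_upper_bound
    {S : Type*} [Fintype S] [Nonempty S]
    (P : S → S → ℝ)
    (hP0 : ∀ s s', 0 ≤ P s s')
    (hP1 : ∀ s, ∑ s', P s s' = 1)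
    (G : Set S) [DecidablePred (· ∈ G)]
    (C : S → ℝ)
    (hC : ∀ s, 0 ≤ C s)
    (v : S → ℝ)
    (hv0 : ∀ s, 0 ≤ v s)
    (hvG : ∀ s ∈ G, v s = 0)
    (hvsup : ∀ s ∉ G, C s + ∑ s', P s s' * v s' ≤ v s) :
    ∀ (n : ℕ) (s : S), costVal P G C n s ≤ v s := by
  intro n
  induction n with
  | zero => intro s; simpa [costVal] using hv0 s
  | succ n ih =>
    intro s
    by_cases hs : s ∈ G
    · simp [costVal, hs, hvG s hs]
    · simp only [costVal, hs, if_false]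
      refine le_trans ?_ (hvsup s hs)
      gcongr with s' _
      · exact hP0 s s'
      · exact ih s'
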